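/- There exists δ* > 0 such that for every δ ∈ (0, δ*) and every x ∈ ℝ the following holds: if (G_n)_{n≥0} is an independent sequence of real random variables on a probability space, each distributed according to the Gaussian measure on ℝ with mean 0 and variance δ, and if Y_0 = x and Y_{n+1} = Y_n − δ·arctan(Y_n) + √2·G_n for all n ≥ 0, then sup_{n≥0} E[cosh(Y_n)] < ∞. -/

import Mathlib

open MeasureTheory ProbabilityTheory
open scoped NNReal ENNReal

section Helpers

lemma arctan_two_gt_one : (1:ℝ) < Real.arctan 2 := by
  have hpi : (1:ℝ)/2 < Real.pi/2 := by linarith [Real.pi_gt_three]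
  have h2 : Real.arctan (2:ℝ)⁻¹ < 1/2 := by
    have ht : (1:ℝ)/2 < Real.tan (1/2) := Real.lt_tan (by norm_num) hpi
    calc Real.arctan (2:ℝ)⁻¹ = Real.arctan (1/2) := by norm_num
      _ < Real.arctan (Real.tan (1/2)) := Real.arctan_strictMono ht
      _ = 1/2 := Real.arctan_tan (by linarith [Real.pi_gt_three]) hpi
  have h3 := Real.arctan_inv_of_pos (by norm_num : (0:ℝ) < 2)
  have h4 := Real.pi_gt_d6
  linarith

lemma cosh_drift_aux {δ y : ℝ} (h0 : 0 ≤ δ) (h1 : δ ≤ 1) (hy : 2 ≤ y) :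
    Real.cosh (y - δ * Real.arctan y) ≤
      Real.exp (-(δ * Real.arctan 2)) * Real.cosh y + Real.exp 2 := by
  set a := Real.arctan 2 with ha_def
  have ha1 : (1:ℝ) < a := arctan_two_gt_one
  have ha2 : a ≤ Real.arctan y := (Real.arctan_strictMono.monotone (by linarith))
  have hub : Real.arctan y < Real.pi/2 := Real.arctan_lt_pi_div_two y
  have hpi : Real.pi < 3.15 := Real.pi_lt_d2
  have h2pos : (0:ℝ) ≤ y - δ * Real.arctan y := by nlinarith
  have hle : y - δ * Real.arctan y ≤ y - δ * a := by nlinarith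
  have step1 : Real.cosh (y - δ * Real.arctan y) ≤ Real.cosh (y - δ * a) :=
    Real.cosh_le_cosh.2 (by
      rw [abs_of_nonneg h2pos, abs_of_nonneg (le_trans h2pos hle)]; exact hle)
  have hc2 : δ * a ≤ 2 := by nlinarith
  have e1 : Real.exp (y - δ * a) = Real.exp (-(δ * a)) * Real.exp y := by
    rw [← Real.exp_add]; ring_nf
  have e2 : Real.exp (-(y - δ * a)) = Real.exp (δ * a) * Real.exp (-y) := by
    rw [← Real.exp_add]; ring_nf
  have hcy : Real.cosh y = (Real.exp y + Real.exp (-y)) / 2 := Real.cosh_eq y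
  have hca : Real.cosh (y - δ * a) = (Real.exp (y - δ * a) + Real.exp (-(y - δ * a))) / 2 :=
    Real.cosh_eq _
  have hexpc : Real.exp (δ * a) ≤ Real.exp 2 := Real.exp_le_exp.2 hc2
  have hexpy : Real.exp (-y) ≤ 1 := Real.exp_le_one_iff.2 (by linarith)
  have h5 : (0:ℝ) < Real.exp (-(δ * a)) := Real.exp_pos _
  have h6 : (0:ℝ) < Real.exp (-y) := Real.exp_pos _
  have h7 : (0:ℝ) < Real.exp (δ * a) := Real.exp_pos _
  calc Real.cosh (y - δ * Real.arctan y) ≤ Real.cosh (y - δ * a) := step1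
    _ ≤ Real.exp (-(δ * a)) * Real.cosh y + Real.exp 2 := by
        rw [hca, hcy, e1, e2]; nlinarith

lemma cosh_drift {δ : ℝ} (h0 : 0 ≤ δ) (h1 : δ ≤ 1) (y : ℝ) :
    Real.cosh (y - δ * Real.arctan y) ≤
      Real.exp (-(δ * Real.arctan 2)) * Real.cosh y + (Real.cosh 4 + Real.exp 2) := by
  rcases le_or_gt 2 y with hy | hy
  · have h := cosh_drift_aux h0 h1 hy
    have := Real.cosh_pos (x := 4)
    linarith
  rcases le_or_gt y (-2) with hy' | hy'
  · have h := cosh_drift_aux h0 h1 (by linarith : (2:ℝ) ≤ -y)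
    have heq : Real.cosh (-y - δ * Real.arctan (-y)) = Real.cosh (y - δ * Real.arctan y) := by
      rw [Real.arctan_neg, ← Real.cosh_neg (y - δ * Real.arctan y)]
      ring_nf
    rw [heq, Real.cosh_neg] at h
    have := Real.cosh_pos (x := 4)
    linarith
  · have hub := Real.arctan_lt_pi_div_two y
    have hlb := Real.neg_pi_div_two_lt_arctan y
    have hpi : Real.pi < 3.15 := Real.pi_lt_d2
    have hb : |y - δ * Real.arctan y| ≤ 4 := by
      rw [abs_le]
      constructor <;> nlinarith
    have h4 : Real.cosh (y - δ * Real.arctan y) ≤ Real.cosh 4 := by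
      refine Real.cosh_le_cosh.2 ?_
      rwa [abs_of_nonneg (by norm_num : (0:ℝ) ≤ 4)]
    have := mul_nonneg (Real.exp_nonneg (-(δ * Real.arctan 2))) (Real.cosh_pos (x := y)).le
    have := Real.exp_nonneg (2:ℝ)
    linarith

lemma gaussian_pdf_mul (v : ℝ≥0) (hv : v ≠ 0) (t x : ℝ) :
    ProbabilityTheory.gaussianPDFReal 0 v x * Real.exp (t * x) =
      Real.exp (v * t^2 / 2) * ProbabilityTheory.gaussianPDFReal (v * t) v x := by
  have hv' : (v:ℝ) ≠ 0 := by exact_mod_cast hv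
  simp only [ProbabilityTheory.gaussianPDFReal, sub_zero]
  rw [mul_assoc, ← Real.exp_add, mul_comm (Real.exp ((v:ℝ) * t^2/2)),
    mul_assoc ((Real.sqrt (2 * Real.pi * (v:ℝ)))⁻¹), ← Real.exp_add]
  congr 1
  field_simp
  ring

lemma integrable_integral_exp_gaussianReal (v : ℝ≥0) (hv : v ≠ 0) (t : ℝ) :
    Integrable (fun x => Real.exp (t * x)) (gaussianReal 0 v) ∧
    ∫ x, Real.exp (t * x) ∂(gaussianReal 0 v) = Real.exp (v * t^2 / 2) := by
  set f : ℝ → ℝ≥0 := fun x => (ProbabilityTheory.gaussianPDFReal 0 v x).toNNReal with hf_def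
  have hfm : Measurable f := (ProbabilityTheory.measurable_gaussianPDFReal 0 v).real_toNNReal
  have hmeas : gaussianReal 0 v = volume.withDensity (fun x => (f x : ℝ≥0∞)) := by
    rw [ProbabilityTheory.gaussianReal_of_var_ne_zero 0 hv]
    congr 1
  have hsmul : ∀ x : ℝ, f x • Real.exp (t * x)
      = Real.exp (v * t^2 / 2) * ProbabilityTheory.gaussianPDFReal (v * t) v x := by
    intro x
    rw [NNReal.smul_def, smul_eq_mul, hf_def]
    simp only
    rw [Real.coe_toNNReal _ (ProbabilityTheory.gaussianPDFReal_nonneg 0 v x)]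
    exact gaussian_pdf_mul v hv t x
  constructor
  · rw [hmeas, integrable_withDensity_iff_integrable_smul hfm]
    have h2 : (fun x => f x • Real.exp (t * x))
        = fun x => Real.exp (v * t^2 / 2) * ProbabilityTheory.gaussianPDFReal (v * t) v x := by
      funext x; exact hsmul x
    rw [h2]
    exact (ProbabilityTheory.integrable_gaussianPDFReal (v*t) v).const_mul _
  · rw [hmeas, integral_withDensity_eq_integral_smul hfm]
    calc ∫ x, f x • Real.exp (t * x)
        = ∫ x, Real.exp (v * t^2 / 2) * ProbabilityTheory.gaussianPDFReal (v * t) v x := by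
          exact integral_congr_ae (Filter.Eventually.of_forall fun x => hsmul x)
      _ = Real.exp (v * t^2 / 2) := by
          rw [integral_const_mul, ProbabilityTheory.integral_gaussianPDFReal_eq_one (v*t) hv,
            mul_one]

lemma iIndepFun_congr {Ω : Type} {mΩ : MeasurableSpace Ω} {P : Measure Ω}
    {f g : ℕ → Ω → ℝ} (h : iIndepFun f P)
    (hae : ∀ i, f i =ᵐ[P] g i) : iIndepFun g P := by
  rw [iIndepFun_iff_measure_inter_preimage_eq_mul] at h ⊢
  intro S sets hsets
  have hpre : ∀ i, (f i ⁻¹' sets i : Set Ω) =ᵐ[P] (g i ⁻¹' sets i) := fun i =>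
    Filter.eventuallyEq_set.2 ((hae i).mono fun ω hω => by
      simp only [Set.mem_preimage, hω])
  have hall : ∀ᵐ ω ∂P, ∀ i ∈ S, f i ω = g i ω :=
    (MeasureTheory.ae_ball_iff S.countable_toSet).2 fun i _ => hae i
  have hInter : (⋂ i ∈ S, f i ⁻¹' sets i : Set Ω) =ᵐ[P] ⋂ i ∈ S, g i ⁻¹' sets i := by
    refine Filter.eventuallyEq_set.2 (hall.mono fun ω hω => ?_)
    simp only [Set.mem_iInter, Set.mem_preimage]
    constructor
    · intro h' i hi; rw [← hω i hi]; exact h' i hi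
    · intro h' i hi; rw [hω i hi]; exact h' i hi
  calc P (⋂ i ∈ S, g i ⁻¹' sets i) = P (⋂ i ∈ S, f i ⁻¹' sets i) :=
        (measure_congr hInter).symm
    _ = ∏ i ∈ S, P (f i ⁻¹' sets i) := h S hsets
    _ = ∏ i ∈ S, P (g i ⁻¹' sets i) := Finset.prod_congr rfl fun i _ => measure_congr (hpre i)

/-- The deterministic Euler recursion as a function of the noise path. -/
noncomputable def eulerF (δ x : ℝ) : ℕ → (ℕ → ℝ) → ℝ
  | 0, _ => x
  | n+1, g => eulerF δ x n g - δ * Real.arctan (eulerF δ x n g) + Real.sqrt 2 * g n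

lemma eulerF_measurable (δ x : ℝ) (n : ℕ) : Measurable (eulerF δ x n) := by
  induction n with
  | zero => exact measurable_const
  | succ n ih =>
      exact ((ih.sub ((Real.measurable_arctan.comp ih).const_mul δ)).add
        (by fun_prop : Measurable fun g : ℕ → ℝ => Real.sqrt 2 * g n))

lemma eulerF_congr (δ x : ℝ) : ∀ (n : ℕ) (g g' : ℕ → ℝ),
    (∀ i, i < n → g i = g' i) → eulerF δ x n g = eulerF δ x n g' := by
  intro n
  induction n with
  | zero => intro g g' _; rfl
  | succ n ih =>
      intro g g' h
      have h1 : eulerF δ x n g = eulerF δ x n g' := ih g g' fun i hi => h i (Nat.lt_succ_of_lt hi)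
      simp only [eulerF, h1, h n (Nat.lt_succ_self n)]

end Helpers

/-- Lemma B.5 (second assertion): there is a `δ* > 0` such that for every step
size `δ ∈ (0, δ*)` and every initial condition `x`, the Euler chain
`Y_{n+1} = Y_n − δ·arctan(Y_n) + √2·G_n` driven by i.i.d. `N(0,δ)` increments
has `sup_n E[cosh Y_n] < ∞`. -/
theorem stmt_9 :
    ∃ δstar : ℝ, 0 < δstar ∧
      ∀ δ : ℝ, 0 < δ → δ < δstar →
        ∀ (x : ℝ) (Ω : Type) (_ : MeasurableSpace Ω) (P : Measure Ω),
          IsProbabilityMeasure P →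
          ∀ G : ℕ → Ω → ℝ,
            iIndepFun G P →
            (∀ n : ℕ, Measure.map (G n) P = gaussianReal 0 δ.toNNReal) →
            ∀ Y : ℕ → Ω → ℝ,
              (∀ ω : Ω, Y 0 ω = x) →
              (∀ (n : ℕ) (ω : Ω),
                Y (n + 1) ω = Y n ω - δ * Real.arctan (Y n ω) +
                  Real.sqrt 2 * G n ω) →
              (⨆ n : ℕ, ∫⁻ ω, ENNReal.ofReal (Real.cosh (Y n ω)) ∂P) < ⊤ := by
  refine ⟨1, one_pos, ?_⟩
  intro δ hδ hδ1' x Ω mΩ P hP G hIndep hlaw Y hY0 hrec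
  have hδ1 : δ ≤ 1 := hδ1'.le
  have hδt : δ.toNNReal ≠ 0 := by
    simp only [ne_eq, Real.toNNReal_eq_zero, not_le]
    exact hδ
  have hcoe : ((δ.toNNReal : ℝ≥0) : ℝ) = δ := Real.coe_toNNReal δ hδ.le
  -- measurable modifications
  have hGae : ∀ n, AEMeasurable (G n) P := by
    intro n
    by_contra h
    have h1 := hlaw n
    rw [Measure.map_of_not_aemeasurable h] at h1
    have h2 : (gaussianReal 0 δ.toNNReal) Set.univ = 1 :=
      (inferInstance : IsProbabilityMeasure (gaussianReal 0 δ.toNNReal)).measure_univ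
    rw [← h1] at h2
    simp at h2
  set G' : ℕ → Ω → ℝ := fun n => (hGae n).mk (G n) with hG'_def
  have hG'm : ∀ n, Measurable (G' n) := fun n => (hGae n).measurable_mk
  have hG'ae : ∀ n, G n =ᵐ[P] G' n := fun n => (hGae n).ae_eq_mk
  have hlaw' : ∀ n, Measure.map (G' n) P = gaussianReal 0 δ.toNNReal := fun n => by
    rw [← Measure.map_congr (hG'ae n)]; exact hlaw n
  have hIndep' : iIndepFun G' P := iIndepFun_congr hIndep hG'ae
  set Y' : ℕ → Ω → ℝ := fun n ω => eulerF δ x n (fun i => G' i ω) with hY'_def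
  have hY'm : ∀ n, Measurable (Y' n) := fun n =>
    (eulerF_measurable δ x n).comp (measurable_pi_lambda _ fun i => hG'm i)
  have hY'rec : ∀ n ω, Y' (n+1) ω = Y' n ω - δ * Real.arctan (Y' n ω) + Real.sqrt 2 * G' n ω :=
    fun n ω => rfl
  have hYae : ∀ n, Y n =ᵐ[P] Y' n := by
    intro n
    induction n with
    | zero =>
        refine Filter.Eventually.of_forall fun ω => ?_
        rw [hY0 ω]; rfl
    | succ n ih =>
        filter_upwards [ih, hG'ae n] with ω h1 h2
        rw [hrec n ω, h1, h2, hY'rec n ω]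
  -- independence of Y' n and G' n
  have hindYG : ∀ n, IndepFun (Y' n) (G' n) P := by
    intro n
    have hd : Disjoint (Finset.range n) ({n} : Finset ℕ) := by simp
    have h := hIndep'.indepFun_finset (Finset.range n) {n} hd hG'm
    set φ : (((Finset.range n : Finset ℕ) : Type) → ℝ) → ℝ := fun v =>
      eulerF δ x n (fun i => if h : i ∈ Finset.range n then v ⟨i, h⟩ else 0) with hφ_def
    have hφ : Measurable φ := by
      refine (eulerF_measurable δ x n).comp (measurable_pi_lambda _ fun i => ?_)
      by_cases hi : i ∈ Finset.range n
      · simp only [hi, dif_pos]; exact measurable_pi_apply _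
      · simp only [hi, dif_neg, not_false_iff]; exact measurable_const
    set ψ : ((({n} : Finset ℕ) : Type) → ℝ) → ℝ := fun v =>
      v ⟨n, Finset.mem_singleton_self n⟩ with hψ_def
    have hψ : Measurable ψ := measurable_pi_apply _
    have h2 := h.comp hφ hψ
    have e1 : (φ ∘ fun ω (i : (Finset.range n : Finset ℕ)) => G' i ω) = Y' n := by
      funext ω
      simp only [Function.comp_apply, hφ_def, hY'_def]
      refine eulerF_congr δ x n _ _ fun i hi => ?_
      simp only [Finset.mem_range.mpr hi, dif_pos]
    have e2 : (ψ ∘ fun ω (i : (({n} : Finset ℕ) : Finset ℕ)) => G' i ω) = G' n := rfl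
    rw [e1, e2] at h2
    exact h2
  -- gaussian exponential moments under P
  have hExpInt : ∀ (n : ℕ) (t : ℝ), Integrable (fun ω => Real.exp (t * G' n ω)) P := by
    intro n t
    have hgi := (integrable_integral_exp_gaussianReal δ.toNNReal hδt t).1
    have hsm : AEStronglyMeasurable (fun y => Real.exp (t * y)) (Measure.map (G' n) P) := by
      exact (Real.measurable_exp.comp (measurable_id.const_mul t)).aestronglyMeasurable
    have := (integrable_map_measure hsm (hG'm n).aemeasurable).1 (by rw [hlaw' n]; exact hgi)
    exact this
  have hExpVal : ∀ (n : ℕ) (t : ℝ),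
      ∫ ω, Real.exp (t * G' n ω) ∂P = Real.exp (δ * t^2 / 2) := by
    intro n t
    have hsm : AEStronglyMeasurable (fun y => Real.exp (t * y)) (Measure.map (G' n) P) :=
      (Real.measurable_exp.comp (measurable_id.const_mul t)).aestronglyMeasurable
    have h1 := integral_map (hG'm n).aemeasurable hsm
    have h2 := (integrable_integral_exp_gaussianReal δ.toNNReal hδt t).2
    rw [hlaw' n] at h1
    rw [← h1, h2, hcoe]
  -- constants
  set a := Real.arctan 2 with ha_def
  have ha1 : (1:ℝ) < a := arctan_two_gt_one
  set K := Real.cosh 4 + Real.exp 2 with hK_def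
  have hK : 0 < K := add_pos (Real.cosh_pos _) (Real.exp_pos _)
  set ρ := Real.exp (δ * (1 - a)) with hρ_def
  have hρ1 : ρ < 1 := by
    rw [hρ_def, Real.exp_lt_one_iff]
    nlinarith
  have hρ0 : 0 < ρ := Real.exp_pos _
  set B := max (Real.cosh x) (Real.exp δ * K / (1 - ρ)) with hB_def
  have hBx : Real.cosh x ≤ B := le_max_left _ _
  have hBK : Real.exp δ * K ≤ B * (1 - ρ) := by
    have h1 : Real.exp δ * K / (1 - ρ) ≤ B := le_max_right _ _
    exact (div_le_iff₀ (by linarith)).1 h1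
  have hρeq : Real.exp δ * Real.exp (-(δ * a)) = ρ := by
    rw [hρ_def, ← Real.exp_add]
    congr 1
    ring
  -- main induction
  have key : ∀ n, Integrable (fun ω => Real.cosh (Y' n ω)) P ∧
      ∫ ω, Real.cosh (Y' n ω) ∂P ≤ B := by
    intro n
    induction n with
    | zero =>
        have h0 : (fun ω => Real.cosh (Y' 0 ω)) = fun _ => Real.cosh x := rfl
        constructor
        · rw [h0]; exact integrable_const _
        · rw [h0, integral_const]
          simp only [probReal_univ, one_smul]
          exact hBx
    | succ n ih =>
        obtain ⟨ihInt, ihLe⟩ := ih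
        have hIpos : 0 ≤ ∫ ω, Real.cosh (Y' n ω) ∂P :=
          integral_nonneg fun ω => (Real.cosh_pos _).le
        set A : Ω → ℝ := fun ω => Y' n ω - δ * Real.arctan (Y' n ω) with hA_def
        have hAm : Measurable A := (hY'm n).sub (((hY'm n).arctan).const_mul δ)
        have hdrift : ∀ ω, Real.cosh (A ω) ≤ Real.exp (-(δ * a)) * Real.cosh (Y' n ω) + K :=
          fun ω => cosh_drift hδ.le hδ1 (Y' n ω)
        have hbound : Integrable (fun ω => Real.exp (-(δ * a)) * Real.cosh (Y' n ω) + K) P :=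
          (ihInt.const_mul _).add (integrable_const K)
        have hintcoshA : Integrable (fun ω => Real.cosh (A ω)) P := by
          refine hbound.mono' (Real.continuous_cosh.measurable.comp hAm).aestronglyMeasurable
            (Filter.Eventually.of_forall fun ω => ?_)
          rw [Real.norm_eq_abs, abs_of_pos (Real.cosh_pos _)]
          exact hdrift ω
        have hexpA : ∀ ω, Real.exp (A ω) ≤ 2 * Real.cosh (A ω) := fun ω => by
          rw [Real.cosh_eq]; have := (Real.exp_pos (-(A ω))).le; linarith
        have hexpnA : ∀ ω, Real.exp (-A ω) ≤ 2 * Real.cosh (A ω) := fun ω => by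
          rw [Real.cosh_eq]; have := (Real.exp_pos (A ω)).le; linarith
        have hintexpA : Integrable (fun ω => Real.exp (A ω)) P := by
          refine (hintcoshA.const_mul 2).mono'
            (Real.measurable_exp.comp hAm).aestronglyMeasurable
            (Filter.Eventually.of_forall fun ω => ?_)
          rw [Real.norm_eq_abs, abs_of_pos (Real.exp_pos _)]
          exact hexpA ω
        have hintexpnA : Integrable (fun ω => Real.exp (-A ω)) P := by
          refine (hintcoshA.const_mul 2).mono'
            (Real.measurable_exp.comp hAm.neg).aestronglyMeasurable
            (Filter.Eventually.of_forall fun ω => ?_)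
          rw [Real.norm_eq_abs, abs_of_pos (Real.exp_pos _)]
          exact hexpnA ω
        -- independence
        have hiA : IndepFun A (G' n) P := by
          have h := (hindYG n).comp
            (measurable_id.sub (Real.measurable_arctan.const_mul δ)) measurable_id
          exact h
        have hiP1 : IndepFun (fun ω => Real.exp (A ω))
            (fun ω => Real.exp (Real.sqrt 2 * G' n ω)) P := by
          have h := hiA.comp Real.measurable_exp
            (Real.measurable_exp.comp (measurable_id.const_mul (Real.sqrt 2)))
          exact h
        have hiP2 : IndepFun (fun ω => Real.exp (-A ω))
            (fun ω => Real.exp (-(Real.sqrt 2 * G' n ω))) P := by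
          have h := hiA.comp (Real.measurable_exp.comp measurable_neg)
            (Real.measurable_exp.comp (measurable_id.const_mul (Real.sqrt 2)).neg)
          exact h
        -- gaussian integrals
        have hg1 : Integrable (fun ω => Real.exp (Real.sqrt 2 * G' n ω)) P := hExpInt n _
        have hg2 : Integrable (fun ω => Real.exp (-(Real.sqrt 2 * G' n ω))) P := by
          have h := hExpInt n (-(Real.sqrt 2))
          exact h.congr (Filter.Eventually.of_forall fun ω =>
            congrArg Real.exp (neg_mul _ _))
        have hsq : Real.sqrt 2 ^ 2 = 2 := Real.sq_sqrt (by norm_num)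
        have hv1 : ∫ ω, Real.exp (Real.sqrt 2 * G' n ω) ∂P = Real.exp δ := by
          rw [hExpVal n _]
          congr 1
          rw [hsq]; ring
        have hv2 : ∫ ω, Real.exp (-(Real.sqrt 2 * G' n ω)) ∂P = Real.exp δ := by
          have h := hExpVal n (-(Real.sqrt 2))
          have h2 : (fun ω => Real.exp (-Real.sqrt 2 * G' n ω))
              = fun ω => Real.exp (-(Real.sqrt 2 * G' n ω)) := by
            funext ω; rw [neg_mul]
          rw [h2] at h
          rw [h]
          congr 1
          rw [neg_sq, hsq]; ring
        -- products
        have hm1 : Integrable (fun ω => Real.exp (A ω) * Real.exp (Real.sqrt 2 * G' n ω)) P := by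
          have h := hiP1.integrable_mul hintexpA hg1
          exact h
        have hm2 : Integrable
            (fun ω => Real.exp (-A ω) * Real.exp (-(Real.sqrt 2 * G' n ω))) P := by
          have h := hiP2.integrable_mul hintexpnA hg2
          exact h
        have hcosh_eq : ∀ ω, Real.cosh (Y' (n+1) ω)
            = (Real.exp (A ω) * Real.exp (Real.sqrt 2 * G' n ω)
              + Real.exp (-A ω) * Real.exp (-(Real.sqrt 2 * G' n ω))) / 2 := by
          intro ω
          have h0 : Y' (n+1) ω = A ω + Real.sqrt 2 * G' n ω := hY'rec n ω
          rw [h0, Real.cosh_eq, Real.exp_add, neg_add, Real.exp_add]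
        have hintY1 : Integrable (fun ω => Real.cosh (Y' (n+1) ω)) P := by
          exact ((hm1.add hm2).div_const 2).congr
            (Filter.Eventually.of_forall fun ω => (hcosh_eq ω).symm)
        have hmul1 : ∫ ω, Real.exp (A ω) * Real.exp (Real.sqrt 2 * G' n ω) ∂P
            = (∫ ω, Real.exp (A ω) ∂P) * ∫ ω, Real.exp (Real.sqrt 2 * G' n ω) ∂P := by
          have h := hiP1.integral_fun_mul_eq_mul_integral hintexpA.aestronglyMeasurable hg1.aestronglyMeasurable
          exact h
        have hmul2 : ∫ ω, Real.exp (-A ω) * Real.exp (-(Real.sqrt 2 * G' n ω)) ∂P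
            = (∫ ω, Real.exp (-A ω) ∂P) * ∫ ω, Real.exp (-(Real.sqrt 2 * G' n ω)) ∂P := by
          have h := hiP2.integral_fun_mul_eq_mul_integral hintexpnA.aestronglyMeasurable hg2.aestronglyMeasurable
          exact h
        have hcoshA_int : ∫ ω, Real.cosh (A ω) ∂P
            = ((∫ ω, Real.exp (A ω) ∂P) + ∫ ω, Real.exp (-A ω) ∂P) / 2 := by
          rw [← integral_add hintexpA hintexpnA, ← integral_div]
          exact integral_congr_ae (Filter.Eventually.of_forall fun ω => Real.cosh_eq (A ω))
        have hI : ∫ ω, Real.cosh (Y' (n+1) ω) ∂P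
            = Real.exp δ * ∫ ω, Real.cosh (A ω) ∂P := by
          rw [integral_congr_ae (Filter.Eventually.of_forall hcosh_eq), integral_div,
            integral_add hm1 hm2, hmul1, hmul2, hv1, hv2, hcoshA_int]
          ring
        have hsplit : ∫ ω, (Real.exp (-(δ * a)) * Real.cosh (Y' n ω) + K) ∂P
            = Real.exp (-(δ * a)) * (∫ ω, Real.cosh (Y' n ω) ∂P) + K := by
          rw [integral_add (ihInt.const_mul _) (integrable_const K), integral_const_mul _ _,
            integral_const]
          simp only [probReal_univ, one_smul]
        have hIle : ∫ ω, Real.cosh (A ω) ∂P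
            ≤ Real.exp (-(δ * a)) * (∫ ω, Real.cosh (Y' n ω) ∂P) + K := by
          rw [← hsplit]
          exact integral_mono hintcoshA hbound hdrift
        refine ⟨hintY1, ?_⟩
        rw [hI]
        have hea : (0:ℝ) < Real.exp (-(δ * a)) := Real.exp_pos _
        have hed : (0:ℝ) < Real.exp δ := Real.exp_pos _
        calc Real.exp δ * ∫ ω, Real.cosh (A ω) ∂P
            ≤ Real.exp δ * (Real.exp (-(δ * a)) * (∫ ω, Real.cosh (Y' n ω) ∂P) + K) :=
              mul_le_mul_of_nonneg_left hIle hed.le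
          _ = Real.exp δ * Real.exp (-(δ * a)) * (∫ ω, Real.cosh (Y' n ω) ∂P)
              + Real.exp δ * K := by ring
          _ ≤ ρ * B + Real.exp δ * K := by
              rw [hρeq]
              have := mul_le_mul_of_nonneg_left ihLe hρ0.le
              linarith
          _ ≤ B := by nlinarith
  -- conclusion
  refine lt_of_le_of_lt (iSup_le fun n => ?_) (ENNReal.ofReal_lt_top : ENNReal.ofReal B < ⊤)
  have h1 : ∫⁻ ω, ENNReal.ofReal (Real.cosh (Y n ω)) ∂P
      = ∫⁻ ω, ENNReal.ofReal (Real.cosh (Y' n ω)) ∂P :=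
    lintegral_congr_ae ((hYae n).mono fun ω h => congrArg (fun z => ENNReal.ofReal (Real.cosh z)) h)
  rw [h1, ← ofReal_integral_eq_lintegral_ofReal (key n).1
    (Filter.Eventually.of_forall fun ω => (Real.cosh_pos _).le)]
  exact ENNReal.ofReal_le_ofReal (key n).2
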